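/- Under the same setup as the Maler meta algorithm (T ≥ 1, G, D > 0, N = ⌈(log₂ T)/2⌉, grid η_i = 2^{−i}/(5DG), η^c = 1/(2GD√T), priors π^c = 1/3 and π_i^s = π_i^ℓ = C/(3(i+1)(i+2)) with C = 1 + 1/(N+1); expert points x_t^c, x_t^{i,s}, x_t^{i,ℓ} in a convex set 𝒟 ⊆ ℝ^d of diameter at most D; gradients g_t with ‖g_t‖ ≤ G; and x_t the tilted exponentially weighted average of the expert points with weights proportional to the prior times the exponentiated negative cumulative surrogate loss of each expert, tilted by its learning rate), it holds that Σ_{t=1}^T c_t(x_t^c) ≥ −ln 3; equivalently, Σ_{t=1}^T c_t(x_t) − Σ_{t=1}^T c_t(x_t^c) ≤ 1/4 + ln 3. -/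

import Mathlib

private lemma exp_sub_sq_le {a : ℝ} (ha : -(1/2) ≤ a) : Real.exp (a - a^2) ≤ 1 + a := by
  rcases le_or_gt 0 a with h0 | h0
  · have h3 : Real.exp (-(a - a^2)) * Real.exp (a - a^2) = 1 := by
      rw [← Real.exp_add]; simp
    have h1 : (1 - (a - a^2)) * Real.exp (a - a^2) ≤ 1 := by
      nlinarith [Real.exp_pos (a - a^2), Real.add_one_le_exp (-(a - a^2))]
    have hpos : 0 < 1 - (a - a^2) := by nlinarith [sq_nonneg (a - 1/2)]
    have h4 : (1:ℝ) ≤ (1 + a) * (1 - (a - a^2)) := by nlinarith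
    nlinarith [Real.exp_pos (a - a^2)]
  · have hu : 0 ≤ a^2 - a := by nlinarith
    have hq := Real.sum_le_exp_of_nonneg hu 3
    have hsum : ∑ i ∈ Finset.range 3, (a^2 - a)^i / (Nat.factorial i) =
        1 + (a^2-a) + (a^2-a)^2/2 := by
      simp [Finset.sum_range_succ, Nat.factorial]
    have hq' : 1 + (a^2 - a) + (a^2 - a)^2/2 ≤ Real.exp (a^2 - a) := by
      rw [← hsum]; exact hq
    have hrec : Real.exp (a - a^2) * Real.exp (a^2 - a) = 1 := by
      rw [← Real.exp_add]; simp
    have hqpos : 0 < 1 + (a^2 - a) + (a^2 - a)^2/2 := by nlinarith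
    have hp : (1:ℝ) ≤ (1 + a) * (1 + (a^2 - a) + (a^2 - a)^2/2) := by
      nlinarith [sq_nonneg a, sq_nonneg (a+1/2), sq_nonneg (a*(a+1/2))]
    nlinarith [mul_le_mul_of_nonneg_left hq' (Real.exp_pos (a - a^2)).le, hrec, hp, hqpos,
      Real.exp_pos (a - a^2)]

private lemma exp_weight_step {a Q : ℝ} (haQ : a^2 ≤ Q) (ha : -(1/2) ≤ a) :
    Real.exp (a - Q) ≤ 1 + a :=
  le_trans (Real.exp_le_exp.2 (by linarith)) (exp_sub_sq_le ha)

private lemma tele_sum (n : ℕ) :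
    ∑ i ∈ Finset.range n, (1:ℝ)/((i+1)*(i+2)) = n/(n+1) := by
  induction n with
  | zero => simp
  | succ n ih =>
    rw [Finset.sum_range_succ, ih]
    have h1 : ((n:ℝ)+1) ≠ 0 := by positivity
    have h2 : ((n:ℝ)+2) ≠ 0 := by positivity
    push_cast
    field_simp
    ring

set_option maxHeartbeats 2000000 in
theorem maler_meta_regret_convex
    (d T : ℕ) (hd : 1 ≤ d) (hT : 1 ≤ T)
    (G D : ℝ) (hG : 0 < G) (hD : 0 < D)
    (N : ℕ) (hN : N = ⌈Real.logb 2 T / 2⌉₊)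
    (η : ℕ → ℝ) (hη : ∀ i, η i = (2 : ℝ)^(-(i : ℤ)) / (5 * D * G))
    (ηc : ℝ) (hηc : ηc = 1 / (2 * G * D * Real.sqrt T))
    (C : ℝ) (hC : C = 1 + 1 / (N + 1))
    (πc : ℝ) (hπc : πc = 1 / 3)
    (πs πl : ℕ → ℝ)
    (hπs : ∀ i, πs i = C / (3 * (i + 1) * (i + 2)))
    (hπl : ∀ i, πl i = C / (3 * (i + 1) * (i + 2)))
    (𝒟 : Set (EuclideanSpace ℝ (Fin d))) (hconv : Convex ℝ 𝒟)
    (hdiam : ∀ a ∈ 𝒟, ∀ b ∈ 𝒟, ‖a - b‖ ≤ D)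
    (xc : ℕ → EuclideanSpace ℝ (Fin d))
    (xs xl : ℕ → ℕ → EuclideanSpace ℝ (Fin d))
    (g : ℕ → EuclideanSpace ℝ (Fin d))
    (hxc : ∀ t ∈ Finset.Icc 1 T, xc t ∈ 𝒟)
    (hxs : ∀ i ≤ N, ∀ t ∈ Finset.Icc 1 T, xs i t ∈ 𝒟)
    (hxl : ∀ i ≤ N, ∀ t ∈ Finset.Icc 1 T, xl i t ∈ 𝒟)
    (hg : ∀ t ∈ Finset.Icc 1 T, ‖g t‖ ≤ G)
    (x : ℕ → EuclideanSpace ℝ (Fin d))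
    (c : ℕ → EuclideanSpace ℝ (Fin d) → ℝ)
    (hc : ∀ t y, c t y = -ηc * (inner ℝ (x t - y) (g t) : ℝ) + (ηc * G * D)^2)
    (s l : ℕ → ℕ → EuclideanSpace ℝ (Fin d) → ℝ)
    (hs : ∀ i t y, s i t y =
      -(η i) * (inner ℝ (x t - y) (g t) : ℝ) + (η i)^2 * G^2 * ‖x t - y‖^2)
    (hl : ∀ i t y, l i t y =
      -(η i) * (inner ℝ (x t - y) (g t) : ℝ) + (η i)^2 * (inner ℝ (x t - y) (g t) : ℝ)^2)
    (Wc : ℕ → ℝ)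
    (hWc : ∀ t, Wc t = Real.exp (-(∑ τ ∈ Finset.Icc 1 (t - 1), c τ (xc τ))))
    (Ws Wl : ℕ → ℕ → ℝ)
    (hWs : ∀ i t, Ws i t = Real.exp (-(∑ τ ∈ Finset.Icc 1 (t - 1), s i τ (xs i τ))))
    (hWl : ∀ i t, Wl i t = Real.exp (-(∑ τ ∈ Finset.Icc 1 (t - 1), l i τ (xl i τ))))
    (hx : ∀ t ∈ Finset.Icc 1 T, x t =
      (πc * ηc * Wc t +
        ∑ i ∈ Finset.range (N + 1), η i * (πs i * Ws i t + πl i * Wl i t))⁻¹ •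
      ((πc * ηc * Wc t) • xc t +
        ∑ i ∈ Finset.range (N + 1),
          ((πs i * η i * Ws i t) • xs i t + (πl i * η i * Wl i t) • xl i t))) :
    (∑ t ∈ Finset.Icc 1 T, c t (xc t)) ≥ -Real.log 3 ∧
    (∑ t ∈ Finset.Icc 1 T, c t (x t)) - (∑ t ∈ Finset.Icc 1 T, c t (xc t))
      ≤ 1 / 4 + Real.log 3 := by
  -- basic positivity facts
  have hT1 : (1:ℝ) ≤ (T:ℝ) := by exact_mod_cast hT
  have hT0 : (0:ℝ) < T := by linarith
  have hsT1 : 1 ≤ Real.sqrt T := by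
    rw [show (1:ℝ) = Real.sqrt 1 by simp]
    exact Real.sqrt_le_sqrt hT1
  have hsT0 : (0:ℝ) < Real.sqrt T := by linarith
  have hηc0 : 0 < ηc := by rw [hηc]; positivity
  have hηcDG : ηc * (D * G) ≤ 1/2 := by
    rw [hηc, div_mul_eq_mul_div, one_mul, div_le_div_iff₀ (by positivity) (by norm_num)]
    nlinarith [mul_pos hD hG, hsT1, mul_le_mul_of_nonneg_left hsT1 (mul_pos hD hG).le]
  have hη0 : ∀ i, 0 < η i := by intro i; rw [hη]; positivity
  have hηDG : ∀ i, η i * (D * G) ≤ 1/2 := by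
    intro i
    rw [hη]
    have h2 : (2:ℝ)^(-(i:ℤ)) ≤ 1 := zpow_le_one_of_nonpos₀ (by norm_num) (by omega)
    have h2' : (0:ℝ) < (2:ℝ)^(-(i:ℤ)) := by positivity
    rw [div_mul_eq_mul_div, div_le_div_iff₀ (by positivity) (by norm_num)]
    nlinarith [mul_pos hD hG, mul_le_mul_of_nonneg_right h2 (mul_pos hD hG).le]
  have hWc0 : ∀ t, 0 < Wc t := fun t => by rw [hWc]; exact Real.exp_pos _
  have hWs0 : ∀ i t, 0 < Ws i t := fun i t => by rw [hWs]; exact Real.exp_pos _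
  have hWl0 : ∀ i t, 0 < Wl i t := fun i t => by rw [hWl]; exact Real.exp_pos _
  have hπc0 : 0 < πc := by rw [hπc]; norm_num
  have hC0 : 0 < C := by rw [hC]; positivity
  have hπs0 : ∀ i, 0 < πs i := fun i => by
    rw [hπs]; exact div_pos hC0 (by positivity)
  have hπl0 : ∀ i, 0 < πl i := fun i => by
    rw [hπl]; exact div_pos hC0 (by positivity)
  have hS0 : ∀ t, 0 < πc * ηc * Wc t +
      ∑ i ∈ Finset.range (N+1), η i * (πs i * Ws i t + πl i * Wl i t) := by
    intro t
    have h1 : 0 < πc * ηc * Wc t := mul_pos (mul_pos hπc0 hηc0) (hWc0 t)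
    refine lt_of_lt_of_le h1 (le_add_of_nonneg_right (Finset.sum_nonneg fun i _ => ?_))
    exact le_of_lt (mul_pos (hη0 i)
      (add_pos (mul_pos (hπs0 i) (hWs0 i t)) (mul_pos (hπl0 i) (hWl0 i t))))
  -- core identity : normalizer * ⟪x t, g t⟫ = ⟪numerator, g t⟫
  have hnum : ∀ t ∈ Finset.Icc 1 T,
      (πc * ηc * Wc t +
        ∑ i ∈ Finset.range (N+1), η i * (πs i * Ws i t + πl i * Wl i t)) *
          (inner ℝ (x t) (g t) : ℝ)
      = (πc * ηc * Wc t) * (inner ℝ (xc t) (g t) : ℝ) +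
        ∑ i ∈ Finset.range (N+1),
          ((πs i * η i * Ws i t) * (inner ℝ (xs i t) (g t) : ℝ) +
           (πl i * η i * Wl i t) * (inner ℝ (xl i t) (g t) : ℝ)) := by
    intro t ht
    rw [hx t ht, real_inner_smul_left, ← mul_assoc, mul_inv_cancel₀ (hS0 t).ne', one_mul]
    rw [inner_add_left, sum_inner, real_inner_smul_left]
    congr 1
    refine Finset.sum_congr rfl fun i _ => ?_
    rw [inner_add_left, real_inner_smul_left, real_inner_smul_left]
  -- expansion of ⟪x t - z, g t⟫
  have hexp : ∀ t ∈ Finset.Icc 1 T, ∀ z : EuclideanSpace ℝ (Fin d),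
      (πc * ηc * Wc t +
        ∑ i ∈ Finset.range (N+1), η i * (πs i * Ws i t + πl i * Wl i t)) *
          (inner ℝ (x t - z) (g t) : ℝ)
      = (πc * ηc * Wc t) * (inner ℝ (xc t - z) (g t) : ℝ) +
        ∑ i ∈ Finset.range (N+1),
          ((πs i * η i * Ws i t) * (inner ℝ (xs i t - z) (g t) : ℝ) +
           (πl i * η i * Wl i t) * (inner ℝ (xl i t - z) (g t) : ℝ)) := by
    intro t ht z
    have h := hnum t ht
    simp only [inner_sub_left]
    have e1 : ∀ i ∈ Finset.range (N+1),
        (πs i * η i * Ws i t) * ((inner ℝ (xs i t) (g t) : ℝ) - (inner ℝ z (g t) : ℝ)) +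
        (πl i * η i * Wl i t) * ((inner ℝ (xl i t) (g t) : ℝ) - (inner ℝ z (g t) : ℝ))
        = ((πs i * η i * Ws i t) * (inner ℝ (xs i t) (g t) : ℝ) +
           (πl i * η i * Wl i t) * (inner ℝ (xl i t) (g t) : ℝ)) -
          (η i * (πs i * Ws i t + πl i * Wl i t)) * (inner ℝ z (g t) : ℝ) :=
      fun i _ => by ring
    rw [Finset.sum_congr rfl e1, Finset.sum_sub_distrib, ← Finset.sum_mul]
    linear_combination h
  -- the zero identity used in the potential step
  have hzero : ∀ t ∈ Finset.Icc 1 T,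
      (πc * ηc * Wc t) * (inner ℝ (x t - xc t) (g t) : ℝ) +
        ∑ i ∈ Finset.range (N+1),
          ((πs i * η i * Ws i t) * (inner ℝ (x t - xs i t) (g t) : ℝ) +
           (πl i * η i * Wl i t) * (inner ℝ (x t - xl i t) (g t) : ℝ)) = 0 := by
    intro t ht
    have h := hnum t ht
    simp only [inner_sub_left]
    have e1 : ∀ i ∈ Finset.range (N+1),
        (πs i * η i * Ws i t) * ((inner ℝ (x t) (g t) : ℝ) - (inner ℝ (xs i t) (g t) : ℝ)) +
        (πl i * η i * Wl i t) * ((inner ℝ (x t) (g t) : ℝ) - (inner ℝ (xl i t) (g t) : ℝ))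
        = (η i * (πs i * Ws i t + πl i * Wl i t)) * (inner ℝ (x t) (g t) : ℝ) -
          ((πs i * η i * Ws i t) * (inner ℝ (xs i t) (g t) : ℝ) +
           (πl i * η i * Wl i t) * (inner ℝ (xl i t) (g t) : ℝ)) :=
      fun i _ => by ring
    rw [Finset.sum_congr rfl e1, Finset.sum_sub_distrib, ← Finset.sum_mul]
    linear_combination h
  -- inner-product bound for points of 𝒟
  have hCS : ∀ t ∈ Finset.Icc 1 T, ∀ y ∈ 𝒟, ∀ z ∈ 𝒟,
      |(inner ℝ (y - z) (g t) : ℝ)| ≤ D * G := by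
    intro t ht y hy z hz
    refine le_trans (abs_real_inner_le_norm _ _) ?_
    exact mul_le_mul (hdiam y hy z hz) (hg t ht) (norm_nonneg _) hD.le
  -- inner-product bound for the aggregated point
  have hxin : ∀ t ∈ Finset.Icc 1 T, ∀ z ∈ 𝒟, |(inner ℝ (x t - z) (g t) : ℝ)| ≤ D * G := by
    intro t ht z hz
    have hSt := hS0 t
    have habs : (πc * ηc * Wc t +
        ∑ i ∈ Finset.range (N+1), η i * (πs i * Ws i t + πl i * Wl i t)) *
          |(inner ℝ (x t - z) (g t) : ℝ)|
        ≤ (πc * ηc * Wc t +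
        ∑ i ∈ Finset.range (N+1), η i * (πs i * Ws i t + πl i * Wl i t)) * (D * G) := by
      have h1 : (πc * ηc * Wc t +
          ∑ i ∈ Finset.range (N+1), η i * (πs i * Ws i t + πl i * Wl i t)) *
            |(inner ℝ (x t - z) (g t) : ℝ)|
          = |(πc * ηc * Wc t) * (inner ℝ (xc t - z) (g t) : ℝ) +
            ∑ i ∈ Finset.range (N+1),
              ((πs i * η i * Ws i t) * (inner ℝ (xs i t - z) (g t) : ℝ) +
               (πl i * η i * Wl i t) * (inner ℝ (xl i t - z) (g t) : ℝ))| := by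
        rw [← hexp t ht z, abs_mul, abs_of_pos hSt]
      rw [h1]
      refine le_trans (abs_add_le _ _) ?_
      have h2 : |(πc * ηc * Wc t) * (inner ℝ (xc t - z) (g t) : ℝ)|
          ≤ (πc * ηc * Wc t) * (D * G) := by
        rw [abs_mul, abs_of_pos (mul_pos (mul_pos hπc0 hηc0) (hWc0 t))]
        exact mul_le_mul_of_nonneg_left (hCS t ht (xc t) (hxc t ht) z hz)
          (le_of_lt (mul_pos (mul_pos hπc0 hηc0) (hWc0 t)))
      have h3 : |∑ i ∈ Finset.range (N+1),
              ((πs i * η i * Ws i t) * (inner ℝ (xs i t - z) (g t) : ℝ) +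
               (πl i * η i * Wl i t) * (inner ℝ (xl i t - z) (g t) : ℝ))|
          ≤ ∑ i ∈ Finset.range (N+1),
              (η i * (πs i * Ws i t + πl i * Wl i t)) * (D * G) := by
        refine le_trans (Finset.abs_sum_le_sum_abs _ _) (Finset.sum_le_sum fun i hi => ?_)
        have hiN : i ≤ N := Nat.lt_succ_iff.mp (Finset.mem_range.mp hi)
        have hs1 : 0 < πs i * η i * Ws i t :=
          mul_pos (mul_pos (hπs0 i) (hη0 i)) (hWs0 i t)
        have hl1 : 0 < πl i * η i * Wl i t :=
          mul_pos (mul_pos (hπl0 i) (hη0 i)) (hWl0 i t)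
        refine le_trans (abs_add_le _ _) ?_
        have h4 : |(πs i * η i * Ws i t) * (inner ℝ (xs i t - z) (g t) : ℝ)|
            ≤ (πs i * η i * Ws i t) * (D * G) := by
          rw [abs_mul, abs_of_pos hs1]
          exact mul_le_mul_of_nonneg_left
            (hCS t ht (xs i t) (hxs i hiN t ht) z hz) hs1.le
        have h5 : |(πl i * η i * Wl i t) * (inner ℝ (xl i t - z) (g t) : ℝ)|
            ≤ (πl i * η i * Wl i t) * (D * G) := by
          rw [abs_mul, abs_of_pos hl1]
          exact mul_le_mul_of_nonneg_left
            (hCS t ht (xl i t) (hxl i hiN t ht) z hz) hl1.le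
        calc |(πs i * η i * Ws i t) * (inner ℝ (xs i t - z) (g t) : ℝ)| +
              |(πl i * η i * Wl i t) * (inner ℝ (xl i t - z) (g t) : ℝ)|
            ≤ (πs i * η i * Ws i t) * (D * G) + (πl i * η i * Wl i t) * (D * G) :=
              add_le_add h4 h5
          _ = (η i * (πs i * Ws i t + πl i * Wl i t)) * (D * G) := by ring
      calc |(πc * ηc * Wc t) * (inner ℝ (xc t - z) (g t) : ℝ)| +
            |∑ i ∈ Finset.range (N+1),
              ((πs i * η i * Ws i t) * (inner ℝ (xs i t - z) (g t) : ℝ) +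
               (πl i * η i * Wl i t) * (inner ℝ (xl i t - z) (g t) : ℝ))|
          ≤ (πc * ηc * Wc t) * (D * G) +
            ∑ i ∈ Finset.range (N+1),
              (η i * (πs i * Ws i t + πl i * Wl i t)) * (D * G) := add_le_add h2 h3
        _ = (πc * ηc * Wc t +
            ∑ i ∈ Finset.range (N+1), η i * (πs i * Ws i t + πl i * Wl i t)) * (D * G) := by
            rw [← Finset.sum_mul]; ring
    exact le_of_mul_le_mul_left habs hSt
  -- per-round potential decrease
  have hstep : ∀ t ∈ Finset.Icc 1 T,
      πc * Wc (t+1) + ∑ i ∈ Finset.range (N+1), (πs i * Ws i (t+1) + πl i * Wl i (t+1))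
      ≤ πc * Wc t + ∑ i ∈ Finset.range (N+1), (πs i * Ws i t + πl i * Wl i t) := by
    intro t ht
    have htT := Finset.mem_Icc.mp ht
    obtain ⟨u, rfl⟩ : ∃ u, t = u + 1 := ⟨t - 1, by omega⟩
    have ht' := ht
    -- expert bounds
    have hbc : Wc (u+1+1) ≤ Wc (u+1) * (1 + ηc * (inner ℝ (x (u+1) - xc (u+1)) (g (u+1)) : ℝ)) := by
      have hrec : Wc (u+1+1) = Wc (u+1) * Real.exp (-(c (u+1) (xc (u+1)))) := by
        rw [hWc (u+1+1), hWc (u+1), ← Real.exp_add]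
        congr 1
        show -(∑ τ ∈ Finset.Icc 1 (u+1), c τ (xc τ)) =
          -(∑ τ ∈ Finset.Icc 1 u, c τ (xc τ)) + -(c (u+1) (xc (u+1)))
        rw [Finset.sum_Icc_succ_top (by omega : 1 ≤ u + 1)]
        ring
      rw [hrec]
      refine mul_le_mul_of_nonneg_left ?_ (hWc0 (u+1)).le
      have hI := hxin (u+1) ht (xc (u+1)) (hxc (u+1) ht)
      set I : ℝ := (inner ℝ (x (u+1) - xc (u+1)) (g (u+1)) : ℝ) with hIdef
      have heq : -(c (u+1) (xc (u+1))) = ηc * I - (ηc * G * D)^2 := by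
        rw [hc]; ring
      rw [heq]
      refine exp_weight_step ?_ ?_
      · have hI2 : I^2 ≤ (D*G)^2 := by
          have := abs_le.mp hI
          nlinarith [this.1, this.2]
        nlinarith [sq_nonneg ηc]
      · have := abs_le.mp hI
        nlinarith [this.1, this.2, hηc0.le, hηcDG, mul_le_mul_of_nonneg_left
          (neg_le_of_abs_le hI) hηc0.le]
    have hbs : ∀ i ∈ Finset.range (N+1),
        Ws i (u+1+1) ≤ Ws i (u+1) *
          (1 + η i * (inner ℝ (x (u+1) - xs i (u+1)) (g (u+1)) : ℝ)) := by
      intro i hi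
      have hiN : i ≤ N := Nat.lt_succ_iff.mp (Finset.mem_range.mp hi)
      have hrec : Ws i (u+1+1) = Ws i (u+1) * Real.exp (-(s i (u+1) (xs i (u+1)))) := by
        rw [hWs i (u+1+1), hWs i (u+1), ← Real.exp_add]
        congr 1
        show -(∑ τ ∈ Finset.Icc 1 (u+1), s i τ (xs i τ)) =
          -(∑ τ ∈ Finset.Icc 1 u, s i τ (xs i τ)) + -(s i (u+1) (xs i (u+1)))
        rw [Finset.sum_Icc_succ_top (by omega : 1 ≤ u + 1)]
        ring
      rw [hrec]
      refine mul_le_mul_of_nonneg_left ?_ (hWs0 i (u+1)).le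
      have hI := hxin (u+1) ht (xs i (u+1)) (hxs i hiN (u+1) ht)
      set I : ℝ := (inner ℝ (x (u+1) - xs i (u+1)) (g (u+1)) : ℝ) with hIdef
      have heq : -(s i (u+1) (xs i (u+1))) =
          η i * I - (η i)^2 * G^2 * ‖x (u+1) - xs i (u+1)‖^2 := by
        rw [hs]; ring
      rw [heq]
      refine exp_weight_step ?_ ?_
      · have hcs : |I| ≤ ‖x (u+1) - xs i (u+1)‖ * ‖g (u+1)‖ := abs_real_inner_le_norm _ _
        have hg' := hg (u+1) ht
        have h1 : I^2 ≤ ‖x (u+1) - xs i (u+1)‖^2 * ‖g (u+1)‖^2 := by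
          nlinarith [abs_nonneg I, sq_abs I, norm_nonneg (x (u+1) - xs i (u+1)),
            norm_nonneg (g (u+1))]
        have h2 : ‖g (u+1)‖^2 ≤ G^2 := by nlinarith [norm_nonneg (g (u+1))]
        have h3 := mul_le_mul_of_nonneg_left h1 (sq_nonneg (η i))
        have h4 := mul_le_mul_of_nonneg_left h2
          (mul_nonneg (sq_nonneg (η i)) (sq_nonneg ‖x (u+1) - xs i (u+1)‖))
        nlinarith [h3, h4]
      · have := abs_le.mp hI
        nlinarith [this.1, (hη0 i).le, hηDG i]
    have hbl : ∀ i ∈ Finset.range (N+1),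
        Wl i (u+1+1) ≤ Wl i (u+1) *
          (1 + η i * (inner ℝ (x (u+1) - xl i (u+1)) (g (u+1)) : ℝ)) := by
      intro i hi
      have hiN : i ≤ N := Nat.lt_succ_iff.mp (Finset.mem_range.mp hi)
      have hrec : Wl i (u+1+1) = Wl i (u+1) * Real.exp (-(l i (u+1) (xl i (u+1)))) := by
        rw [hWl i (u+1+1), hWl i (u+1), ← Real.exp_add]
        congr 1
        show -(∑ τ ∈ Finset.Icc 1 (u+1), l i τ (xl i τ)) =
          -(∑ τ ∈ Finset.Icc 1 u, l i τ (xl i τ)) + -(l i (u+1) (xl i (u+1)))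
        rw [Finset.sum_Icc_succ_top (by omega : 1 ≤ u + 1)]
        ring
      rw [hrec]
      refine mul_le_mul_of_nonneg_left ?_ (hWl0 i (u+1)).le
      have hI := hxin (u+1) ht (xl i (u+1)) (hxl i hiN (u+1) ht)
      set I : ℝ := (inner ℝ (x (u+1) - xl i (u+1)) (g (u+1)) : ℝ) with hIdef
      have heq : -(l i (u+1) (xl i (u+1))) = η i * I - (η i)^2 * I^2 := by
        rw [hl]; ring
      rw [heq]
      refine exp_weight_step (by nlinarith [sq_nonneg (η i * I)]) ?_
      have := abs_le.mp hI
      nlinarith [this.1, (hη0 i).le, hηDG i]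
    -- combine
    have hcomb : πc * Wc (u+1+1) +
        ∑ i ∈ Finset.range (N+1), (πs i * Ws i (u+1+1) + πl i * Wl i (u+1+1))
        ≤ πc * (Wc (u+1) * (1 + ηc * (inner ℝ (x (u+1) - xc (u+1)) (g (u+1)) : ℝ))) +
          ∑ i ∈ Finset.range (N+1),
            (πs i * (Ws i (u+1) * (1 + η i * (inner ℝ (x (u+1) - xs i (u+1)) (g (u+1)) : ℝ))) +
             πl i * (Wl i (u+1) * (1 + η i * (inner ℝ (x (u+1) - xl i (u+1)) (g (u+1)) : ℝ)))) := by
      refine add_le_add (mul_le_mul_of_nonneg_left hbc hπc0.le)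
        (Finset.sum_le_sum fun i hi => add_le_add
          (mul_le_mul_of_nonneg_left (hbs i hi) (hπs0 i).le)
          (mul_le_mul_of_nonneg_left (hbl i hi) (hπl0 i).le))
    refine le_trans hcomb ?_
    have hsplit : ∑ i ∈ Finset.range (N+1),
          (πs i * (Ws i (u+1) * (1 + η i * (inner ℝ (x (u+1) - xs i (u+1)) (g (u+1)) : ℝ))) +
           πl i * (Wl i (u+1) * (1 + η i * (inner ℝ (x (u+1) - xl i (u+1)) (g (u+1)) : ℝ))))
        = ∑ i ∈ Finset.range (N+1), (πs i * Ws i (u+1) + πl i * Wl i (u+1)) +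
          ∑ i ∈ Finset.range (N+1),
            ((πs i * η i * Ws i (u+1)) * (inner ℝ (x (u+1) - xs i (u+1)) (g (u+1)) : ℝ) +
             (πl i * η i * Wl i (u+1)) * (inner ℝ (x (u+1) - xl i (u+1)) (g (u+1)) : ℝ)) := by
      rw [← Finset.sum_add_distrib]
      exact Finset.sum_congr rfl fun i _ => by ring
    rw [hsplit]
    have hz := hzero (u+1) ht
    linarith [hz]
  -- potential is at most its initial value
  have key : ∀ t, 1 ≤ t → t ≤ T + 1 →
      πc * Wc t + ∑ i ∈ Finset.range (N+1), (πs i * Ws i t + πl i * Wl i t)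
      ≤ πc * Wc 1 + ∑ i ∈ Finset.range (N+1), (πs i * Ws i 1 + πl i * Wl i 1) := by
    intro t
    induction t with
    | zero => intro h; omega
    | succ u ih =>
      intro h1 h2
      by_cases hu : u = 0
      · subst hu; exact le_refl _
      · have hu1 : 1 ≤ u := Nat.one_le_iff_ne_zero.mpr hu
        refine le_trans (hstep u (Finset.mem_Icc.mpr ⟨hu1, by omega⟩)) (ih hu1 (by omega))
  -- value of the initial potential
  have hWc1 : Wc 1 = 1 := by rw [hWc]; simp
  have hWs1 : ∀ i, Ws i 1 = 1 := fun i => by rw [hWs]; simp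
  have hWl1 : ∀ i, Wl i 1 = 1 := fun i => by rw [hWl]; simp
  have hP1 : πc * Wc 1 + ∑ i ∈ Finset.range (N+1), (πs i * Ws i 1 + πl i * Wl i 1) = 1 := by
    rw [hWc1, mul_one]
    have h1 : ∑ i ∈ Finset.range (N+1), (πs i * Ws i 1 + πl i * Wl i 1)
        = (2*C/3) * ∑ i ∈ Finset.range (N+1), (1:ℝ)/((i+1)*(i+2)) := by
      rw [Finset.mul_sum]
      refine Finset.sum_congr rfl fun i _ => ?_
      rw [hWs1 i, hWl1 i, mul_one, mul_one, hπs, hπl]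
      have hi1 : ((i:ℝ)+1) ≠ 0 := by positivity
      have hi2 : ((i:ℝ)+2) ≠ 0 := by positivity
      field_simp
      ring
    rw [h1, tele_sum, hπc, hC]
    have h2 : ((N:ℝ)+1) ≠ 0 := by positivity
    have h3 : ((N:ℝ)+1+1) ≠ 0 := by positivity
    push_cast
    field_simp
    ring
  -- first conclusion
  have hpart1 : (∑ t ∈ Finset.Icc 1 T, c t (xc t)) ≥ -Real.log 3 := by
    have hk := key (T+1) (by omega) (le_refl _)
    rw [hP1] at hk
    have hWcT : Wc (T+1) = Real.exp (-(∑ t ∈ Finset.Icc 1 T, c t (xc t))) := by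
      rw [hWc]; norm_num
    have h2 : πc * Wc (T+1) ≤ 1 := by
      refine le_trans (le_add_of_nonneg_right (Finset.sum_nonneg fun i _ => ?_)) hk
      exact le_of_lt (add_pos (mul_pos (hπs0 i) (hWs0 i (T+1)))
        (mul_pos (hπl0 i) (hWl0 i (T+1))))
    rw [hWcT, hπc] at h2
    have h3 : Real.exp (-(∑ t ∈ Finset.Icc 1 T, c t (xc t))) ≤ 3 := by linarith
    have h4 : -(∑ t ∈ Finset.Icc 1 T, c t (xc t)) ≤ Real.log 3 :=
      (Real.le_log_iff_exp_le (by norm_num)).mpr h3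
    linarith
  -- sum of meta losses
  have hsum_x : ∑ t ∈ Finset.Icc 1 T, c t (x t) = 1/4 := by
    have hterm : ∀ t ∈ Finset.Icc 1 T, c t (x t) = (ηc*G*D)^2 := fun t _ => by
      rw [hc]; simp
    rw [Finset.sum_congr rfl hterm, Finset.sum_const, Nat.card_Icc, nsmul_eq_mul]
    have hval : ηc * G * D = 1/(2*Real.sqrt T) := by
      rw [hηc]; field_simp
    rw [hval]
    have hsq : Real.sqrt T ^ 2 = (T:ℝ) := Real.sq_sqrt hT0.le
    have hTcast : ((T + 1 - 1 : ℕ) : ℝ) = (T : ℝ) := by norm_num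
    rw [hTcast, div_pow, one_pow, mul_pow, hsq]
    field_simp
    ring
  refine ⟨hpart1, ?_⟩
  rw [hsum_x]
  linarith [hpart1]
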